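/- For every integer p ≥ 3, there exists a finite simple graph G on 2p + 1 vertices with Δ(G) = p, mad(G) = 3 − 5/(2p + 1), and χ²(G) = p + 2. (Such a graph is obtained by joining two vertices a and c by one path with a single internal vertex and by p − 1 internally disjoint paths each with two internal vertices.) -/

import Mathlib

open SimpleGraph

def SimpleGraph.square {V : Type*} (G : SimpleGraph V) : SimpleGraph V where
  Adj u v := u ≠ v ∧ (G.Adj u v ∨ ∃ w, G.Adj u w ∧ G.Adj w v)
  symm := by
    constructor
    rintro u v ⟨h, hadj | ⟨w, h1, h2⟩⟩
    · exact ⟨Ne.symm h, Or.inl hadj.symm⟩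
    · exact ⟨Ne.symm h, Or.inr ⟨w, h2.symm, h1.symm⟩⟩
  loopless := ⟨fun v h => h.1 rfl⟩

/-- `G` is list `k`-colorable. -/
def SimpleGraph.IsListColorable {V : Type*} (G : SimpleGraph V) (k : ℕ) : Prop :=
  ∀ L : V → Finset ℕ, (∀ v, (L v).card = k) →
    ∃ c : V → ℕ, (∀ v, c v ∈ L v) ∧ ∀ u v, G.Adj u v → c u ≠ c v

noncomputable def deg {V : Type*} (G : SimpleGraph V) (v : V) : ℕ :=
  (G.neighborSet v).ncard

noncomputable def maxDeg {V : Type*} [Fintype V] (G : SimpleGraph V) : ℕ :=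
  Finset.univ.sup (deg G)

noncomputable def chi2l {V : Type*} (G : SimpleGraph V) : ℕ :=
  sInf {k | (G.square).IsListColorable k}

def madLT {V : Type*} (G : SimpleGraph V) (m : ℝ) : Prop :=
  ∀ H : G.Subgraph, H.verts.Nonempty →
    2 * (H.edgeSet.ncard : ℝ) < m * (H.verts.ncard : ℝ)


namespace S13
open Finset

def rel (m k : ℕ) : Prop :=
  (m = 0 ∧ k % 2 = 1) ∨ (m % 2 = 1 ∧ k = m + 1) ∨ (m = 2 ∧ k % 2 = 0 ∧ 4 ≤ k)

instance reldec (m k : ℕ) : Decidable (rel m k) := by unfold rel; infer_instance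

def graph (p : ℕ) : SimpleGraph (Fin (2*p+1)) where
  Adj u v := rel u.val v.val ∨ rel v.val u.val
  symm := ⟨fun u v h => h.symm⟩
  loopless := ⟨fun v h => by change rel _ _ ∨ rel _ _ at h; unfold rel at h; omega⟩

instance gdec (p : ℕ) : DecidableRel (graph p).Adj := fun u v => by
  show Decidable (rel _ _ ∨ rel _ _); infer_instance

lemma adj_iff {p : ℕ} (u v : Fin (2*p+1)) :
    (graph p).Adj u v ↔ rel u.val v.val ∨ rel v.val u.val := Iff.rfl

lemma adj_zero {p : ℕ} (u v : Fin (2*p+1)) (h0 : u.val = 0) :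
    (graph p).Adj u v ↔ v.val % 2 = 1 := by rw [adj_iff]; unfold rel; omega

lemma adj_odd {p : ℕ} (u v : Fin (2*p+1)) (h0 : u.val % 2 = 1) :
    (graph p).Adj u v ↔ v.val = 0 ∨ v.val = u.val + 1 := by rw [adj_iff]; unfold rel; omega

lemma adj_two {p : ℕ} (u v : Fin (2*p+1)) (h0 : u.val = 2) :
    (graph p).Adj u v ↔ v.val = 1 ∨ (v.val % 2 = 0 ∧ 4 ≤ v.val) := by
  rw [adj_iff]; unfold rel; omega

lemma adj_even {p : ℕ} (u v : Fin (2*p+1)) (h0 : u.val % 2 = 0) (h4 : 4 ≤ u.val) :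
    (graph p).Adj u v ↔ v.val = 2 ∨ v.val + 1 = u.val := by rw [adj_iff]; unfold rel; omega


lemma card_fin_filter (N : ℕ) (P : ℕ → Prop) [DecidablePred P] :
    (univ.filter (fun v : Fin N => P v.val)).card = ((range N).filter P).card := by
  apply Finset.card_bij (fun v _ => v.val)
  · intro v hv; simp only [mem_filter, mem_range, mem_univ, true_and] at hv ⊢
    exact ⟨v.isLt, hv⟩
  · intro u hu v hv h; exact Fin.ext h
  · intro b hb; simp at hb; exact ⟨⟨b, hb.1⟩, by simp [hb.2]⟩

lemma count_odd_range (p : ℕ) : ((range (2*p+1)).filter (fun m => m % 2 = 1)).card = p := by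
  induction p with
  | zero => decide
  | succ q ih =>
    have h1 : 2*(q+1)+1 = (2*q+1) + 1 + 1 := by ring
    rw [h1, Finset.range_add_one, Finset.range_add_one, Finset.filter_insert, Finset.filter_insert]
    have e1 : ¬ ((2*q+1+1) % 2 = 1) := by omega
    have e2 : (2*q+1) % 2 = 1 := by omega
    simp only [if_neg e1, if_pos e2]
    rw [Finset.card_insert_of_notMem (by simp)]
    omega

lemma count_even4_range (p : ℕ) :
    ((range (2*p+1)).filter (fun m => m % 2 = 0 ∧ 4 ≤ m)).card + 1 = p ∨ p = 0 := by
  induction p with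
  | zero => right; rfl
  | succ q ih =>
    left
    have h1 : 2*(q+1)+1 = (2*q+1) + 1 + 1 := by ring
    rw [h1, Finset.range_add_one, Finset.range_add_one, Finset.filter_insert, Finset.filter_insert]
    have e2 : ¬ ((2*q+1) % 2 = 0 ∧ 4 ≤ 2*q+1) := by omega
    simp only [if_neg e2]
    by_cases hq : q = 0
    · subst hq; decide
    · have e1 : (2*q+1+1) % 2 = 0 ∧ 4 ≤ 2*q+1+1 := by omega
      simp only [if_pos e1]
      rw [Finset.card_insert_of_notMem (by simp)]
      omega

lemma card_odd_fin (p : ℕ) :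
    (univ.filter (fun v : Fin (2*p+1) => v.val % 2 = 1)).card = p := by
  rw [card_fin_filter (2*p+1) (fun m => m % 2 = 1)]; exact count_odd_range p

lemma card_even4_fin (p : ℕ) (hp : 1 ≤ p) :
    (univ.filter (fun v : Fin (2*p+1) => v.val % 2 = 0 ∧ 4 ≤ v.val)).card + 1 = p := by
  rw [card_fin_filter (2*p+1) (fun m => m % 2 = 0 ∧ 4 ≤ m)]
  rcases count_even4_range p with h | h
  · exact h
  · omega

lemma card_val_eq (N m : ℕ) (h : m < N) :
    (univ.filter (fun v : Fin N => v.val = m)).card = 1 := by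
  rw [Finset.card_eq_one]
  refine ⟨⟨m, h⟩, ?_⟩
  ext v; simp [Fin.ext_iff]

lemma card_val_two (N a b : ℕ) (ha : a < N) (hb : b < N) (hab : a ≠ b) :
    (univ.filter (fun v : Fin N => v.val = a ∨ v.val = b)).card = 2 := by
  rw [Finset.filter_or, Finset.card_union_of_disjoint]
  · rw [card_val_eq N a ha, card_val_eq N b hb]
  · rw [Finset.disjoint_left]; intro x hx hx'; simp at hx hx'; omega


lemma deg_filter {p : ℕ} (v : Fin (2*p+1)) :
    deg (graph p) v = (univ.filter (fun u => (graph p).Adj v u)).card := by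
  rw [deg, Set.ncard_eq_toFinset_card']
  congr 1
  ext u
  simp [Set.mem_toFinset]

lemma deg_val (p : ℕ) (hp : 3 ≤ p) (v : Fin (2*p+1)) :
    deg (graph p) v = if v.val = 0 ∨ v.val = 2 then p else 2 := by
  rw [deg_filter]
  have hv := v.isLt
  by_cases h0 : v.val = 0
  · rw [if_pos (Or.inl h0), Finset.filter_congr (fun u _ => by rw [adj_zero v u h0])]
    exact card_odd_fin p
  · by_cases h2 : v.val = 2
    · rw [if_pos (Or.inr h2), Finset.filter_congr (fun u _ => by rw [adj_two v u h2])]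
      rw [Finset.filter_or, Finset.card_union_of_disjoint]
      · rw [card_val_eq _ 1 (by omega)]
        have := card_even4_fin p (by omega)
        omega
      · rw [Finset.disjoint_left]; intro x hx hx'; simp at hx hx'; omega
    · rw [if_neg (by omega)]
      by_cases ho : v.val % 2 = 1
      · rw [Finset.filter_congr (fun u _ => by rw [adj_odd v u ho])]
        exact card_val_two _ 0 (v.val+1) (by omega) (by omega) (by omega)
      · have h4 : 4 ≤ v.val := by omega
        rw [Finset.filter_congr (fun u _ => by rw [adj_even v u (by omega) h4])]
        rw [Finset.filter_congr (fun u (_ : u ∈ univ) => (by omega :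
          (u.val = 2 ∨ u.val + 1 = v.val) ↔ (u.val = 2 ∨ u.val = v.val - 1)))]
        exact card_val_two _ 2 (v.val-1) (by omega) (by omega) (by omega)

lemma maxDeg_eq (p : ℕ) (hp : 3 ≤ p) : maxDeg (graph p) = p := by
  apply le_antisymm
  · apply Finset.sup_le
    intro v _
    rw [deg_val p hp v]
    split <;> omega
  · have h : deg (graph p) ⟨0, by omega⟩ = p := by rw [deg_val p hp]; simp
    exact le_trans (le_of_eq h.symm) (Finset.le_sup (f := deg (graph p)) (Finset.mem_univ _))

lemma degree_eq_deg (p : ℕ) (v : Fin (2*p+1)) : (graph p).degree v = deg (graph p) v := by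
  rw [deg, Set.ncard_eq_toFinset_card', ← SimpleGraph.card_neighborFinset_eq_degree]
  congr 1

lemma card_edgeFinset (p : ℕ) (hp : 3 ≤ p) : (graph p).edgeFinset.card = 3*p - 1 := by
  have hs := SimpleGraph.sum_degrees_eq_twice_card_edges (graph p)
  have h2 : ∑ v : Fin (2*p+1), (graph p).degree v
      = ∑ v : Fin (2*p+1), (if v.val = 0 ∨ v.val = 2 then p else 2) := by
    apply Finset.sum_congr rfl
    intro v _
    rw [degree_eq_deg, deg_val p hp]
  rw [h2, Finset.sum_ite, Finset.sum_const, Finset.sum_const] at hs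
  have hcard2 : (univ.filter (fun v : Fin (2*p+1) => v.val = 0 ∨ v.val = 2)).card = 2 :=
    card_val_two _ 0 2 (by omega) (by omega) (by omega)
  have hsplit : (univ.filter (fun v : Fin (2*p+1) => v.val = 0 ∨ v.val = 2)).card
      + (univ.filter (fun v : Fin (2*p+1) => ¬(v.val = 0 ∨ v.val = 2))).card = 2*p+1 := by
    have := Finset.card_filter_add_card_filter_not
      (s := (univ : Finset (Fin (2*p+1)))) (p := fun v => v.val = 0 ∨ v.val = 2)
    simpa using this
  rw [hcard2] at hs hsplit
  simp only [smul_eq_mul] at hs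
  omega


lemma arith (p o e m oa ec a c E V : ℕ) (hp : 3 ≤ p)
    (ho : o ≤ p) (he : e + 1 ≤ p) (hmo : m ≤ o) (hmec : m ≤ e + c)
    (hoa : oa ≤ a * o) (hecb : ec ≤ c * e) (ha : a ≤ 1) (hc : c ≤ 1)
    (hE : E ≤ oa + m + ec) (hV : V = a + c + o + e) :
    (4*p+2) * E ≤ (6*p-2) * V := by
  subst hV
  obtain ⟨s, rfl⟩ : ∃ s, p = s + 3 := ⟨p - 3, by omega⟩
  have h62 : 6*(s+3)-2 = 6*s+16 := by omega
  rw [h62]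
  interval_cases a <;> interval_cases c <;> simp only [one_mul, zero_mul] at hoa hecb <;>
    nlinarith [Nat.mul_le_mul_left s hmo, Nat.mul_le_mul_left s hmec,
      Nat.mul_le_mul_left s ho, Nat.mul_le_mul_left s he,
      Nat.mul_le_mul_left o he, Nat.mul_le_mul_left m he, Nat.mul_le_mul_left e hmo]

def keyfun {p : ℕ} (u v : Fin (2*p+1)) : Fin (2*p+1) × ℕ :=
  if u.val % 2 = 1 ∧ v.val % 2 = 0 then (u, if v.val = 0 then 0 else 1)
  else if v.val % 2 = 1 ∧ u.val % 2 = 0 then (v, if u.val = 0 then 0 else 1)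
  else if u.val ≤ v.val then (v, 2) else (u, 2)

lemma keyfun_symm {p : ℕ} (u v : Fin (2*p+1)) : keyfun u v = keyfun v u := by
  unfold keyfun
  split_ifs <;> first
    | rfl
    | (exfalso; omega)
    | (simp only [Prod.mk.injEq, Fin.ext_iff, and_true]; omega)

def psi (p : ℕ) : Sym2 (Fin (2*p+1)) → Fin (2*p+1) × ℕ :=
  Sym2.lift ⟨keyfun, keyfun_symm⟩

lemma psi_mk {p : ℕ} (u v : Fin (2*p+1)) : psi p s(u,v) = keyfun u v := rfl

lemma keyfun_spec {p : ℕ} (u v : Fin (2*p+1)) (h : rel u.val v.val) :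
    (u.val = 0 ∧ v.val % 2 = 1 ∧ keyfun u v = (v, 0)) ∨
    (u.val % 2 = 1 ∧ v.val = u.val + 1 ∧ keyfun u v = (u, 1)) ∨
    (u.val = 2 ∧ v.val % 2 = 0 ∧ 4 ≤ v.val ∧ keyfun u v = (v, 2)) := by
  unfold rel at h; unfold keyfun
  rcases h with h|h|h
  · left
    refine ⟨h.1, h.2, ?_⟩
    rw [if_neg (by omega), if_pos (by omega), if_pos h.1]
  · right; left
    refine ⟨h.1, h.2, ?_⟩
    rw [if_pos (by omega), if_neg (by omega)]
  · right; right
    refine ⟨h.1, h.2.1, h.2.2, ?_⟩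
    rw [if_neg (by omega), if_neg (by omega), if_pos (by omega)]

lemma edge_cases {p : ℕ} (H : (graph p).Subgraph) (e : Sym2 (Fin (2*p+1)))
    (he : e ∈ H.edgeSet) :
    ∃ u v, e = s(u,v) ∧ u ∈ H.verts ∧ v ∈ H.verts ∧ rel u.val v.val := by
  revert he
  refine Sym2.ind (fun u v he => ?_) e
  rw [Subgraph.mem_edgeSet] at he
  have hg := H.adj_sub he
  have hu := H.edge_vert he
  have hv := H.edge_vert he.symm
  rcases hg with h | h
  · exact ⟨u, v, rfl, hu, hv, h⟩
  · exact ⟨v, u, Sym2.eq_swap, hv, hu, h⟩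

lemma sub_bound {p : ℕ} (hp : 3 ≤ p) (H : (graph p).Subgraph) :
    (4*p+2) * H.edgeSet.ncard ≤ (6*p-2) * H.verts.ncard := by
  classical
  have hvfin : H.verts.Finite := Set.toFinite _
  have hefin : H.edgeSet.Finite := Set.toFinite _
  set Sf := hvfin.toFinset with hSf
  set Ff := hefin.toFinset with hFf
  have hmemS : ∀ v, v ∈ Sf ↔ v ∈ H.verts := fun v => hvfin.mem_toFinset
  set O := Sf.filter (fun v => v.val % 2 = 1) with hO
  set Ev := Sf.filter (fun v => v.val % 2 = 0 ∧ 4 ≤ v.val) with hEv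
  set M := Sf.filter (fun v => v.val % 2 = 1 ∧ ∃ u ∈ Sf, u.val = v.val + 1) with hM
  set O0 := Sf.filter (fun v => v.val % 2 = 1 ∧ ∃ u ∈ Sf, u.val = 0) with hO0
  set Ev2 := Sf.filter (fun v => (v.val % 2 = 0 ∧ 4 ≤ v.val) ∧ ∃ u ∈ Sf, u.val = 2) with hEv2
  set A := Sf.filter (fun v => v.val = 0) with hA
  set C := Sf.filter (fun v => v.val = 2) with hC
  -- vertex partition
  have hV : Sf.card = A.card + C.card + O.card + Ev.card := by
    have hsplit : Sf = (A ∪ C) ∪ (O ∪ Ev) := by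
      ext v
      simp only [hA, hC, hO, hEv, Finset.mem_union, Finset.mem_filter]
      constructor
      · intro hv
        have := v.isLt
        rcases (by omega : v.val = 0 ∨ v.val = 2 ∨ v.val % 2 = 1 ∨
            (v.val % 2 = 0 ∧ 4 ≤ v.val)) with h|h|h|h
        · exact Or.inl (Or.inl ⟨hv, h⟩)
        · exact Or.inl (Or.inr ⟨hv, h⟩)
        · exact Or.inr (Or.inl ⟨hv, h⟩)
        · exact Or.inr (Or.inr ⟨hv, h⟩)
      · rintro ((⟨h,-⟩|⟨h,-⟩)|(⟨h,-⟩|⟨h,-⟩)) <;> exact h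
    rw [hsplit, Finset.card_union_of_disjoint, Finset.card_union_of_disjoint,
        Finset.card_union_of_disjoint]
    · omega
    · rw [Finset.disjoint_left]; intro x hx hx'
      simp only [hO, hEv, Finset.mem_filter] at hx hx'; omega
    · rw [Finset.disjoint_left]; intro x hx hx'
      simp only [hA, hC, Finset.mem_filter] at hx hx'; omega
    · rw [Finset.disjoint_left]; intro x hx hx'
      simp only [hA, hC, hO, hEv, Finset.mem_union, Finset.mem_filter] at hx hx'; omega
  -- basic bounds
  have ho : O.card ≤ p := by
    calc O.card ≤ (univ.filter (fun v : Fin (2*p+1) => v.val % 2 = 1)).card := by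
          apply Finset.card_le_card
          intro x hx
          simp only [hO, Finset.mem_filter] at hx
          simp [hx.2]
      _ = p := card_odd_fin p
  have he : Ev.card + 1 ≤ p := by
    have h1 : Ev.card ≤ (univ.filter (fun v : Fin (2*p+1) => v.val % 2 = 0 ∧ 4 ≤ v.val)).card := by
      apply Finset.card_le_card
      intro x hx
      simp only [hEv, Finset.mem_filter] at hx
      simp [hx.2]
    have h2 := card_even4_fin p (by omega)
    omega
  have hmo : M.card ≤ O.card := by
    apply Finset.card_le_card
    intro x hx
    simp only [hM, hO, Finset.mem_filter] at hx ⊢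
    exact ⟨hx.1, hx.2.1⟩
  have hmec : M.card ≤ Ev.card + C.card := by
    have step1 : M.card ≤ (Sf.filter (fun v => v.val % 2 = 0 ∧ 2 ≤ v.val)).card := by
      apply Finset.card_le_card_of_injOn
        (fun v => if h : v.val + 1 < 2*p+1 then (⟨v.val+1, h⟩ : Fin (2*p+1)) else v)
      · intro v hv
        simp only [hM, Finset.mem_coe, Finset.mem_filter] at hv
        obtain ⟨hvS, hodd, u, huS, hu⟩ := hv
        have hlt : v.val + 1 < 2*p+1 := by have := v.isLt; omega
        beta_reduce
        rw [dif_pos hlt]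
        have huv : (⟨v.val+1, hlt⟩ : Fin (2*p+1)) = u := Fin.ext (by simp [hu])
        rw [huv]
        simp only [Finset.mem_coe, Finset.mem_filter]
        exact ⟨huS, by omega⟩
      · intro v1 h1 v2 h2 heq
        simp only [hM, Finset.coe_filter, Set.mem_setOf_eq] at h1 h2
        have l1 : v1.val + 1 < 2*p+1 := by have := v1.isLt; have := h1.2.1; omega
        have l2 : v2.val + 1 < 2*p+1 := by have := v2.isLt; have := h2.2.1; omega
        have heq' : (⟨v1.val+1, l1⟩ : Fin (2*p+1)) = ⟨v2.val+1, l2⟩ := by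
          simpa only [dif_pos l1, dif_pos l2] using heq
        have : v1.val + 1 = v2.val + 1 := congrArg Fin.val heq'
        exact Fin.ext (by omega)
    have step2 : (Sf.filter (fun v => v.val % 2 = 0 ∧ 2 ≤ v.val)).card ≤ Ev.card + C.card := by
      have hsub : Sf.filter (fun v => v.val % 2 = 0 ∧ 2 ≤ v.val) ⊆ Ev ∪ C := by
        intro x hx
        simp only [hEv, hC, Finset.mem_filter, Finset.mem_union] at hx ⊢
        obtain ⟨hxS, hx0, hx2⟩ := hx
        rcases (by omega : 4 ≤ x.val ∨ x.val = 2) with h|h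
        · exact Or.inl ⟨hxS, hx0, h⟩
        · exact Or.inr ⟨hxS, h⟩
      calc _ ≤ (Ev ∪ C).card := Finset.card_le_card hsub
        _ ≤ _ := Finset.card_union_le _ _
    omega
  have ha : A.card ≤ 1 := by
    have := card_val_eq (2*p+1) 0 (by omega)
    have hsub : A ⊆ univ.filter (fun v : Fin (2*p+1) => v.val = 0) := by
      intro x hx; simp only [hA, Finset.mem_filter] at hx; simp only [Finset.mem_filter, Finset.mem_univ, true_and]; exact hx.2
    have := Finset.card_le_card hsub
    omega
  have hc : C.card ≤ 1 := by
    have := card_val_eq (2*p+1) 2 (by omega)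
    have hsub : C ⊆ univ.filter (fun v : Fin (2*p+1) => v.val = 2) := by
      intro x hx; simp only [hC, Finset.mem_filter] at hx; simp [hx.2]
    have := Finset.card_le_card hsub
    omega
  have hoa : O0.card ≤ A.card * O.card := by
    by_cases h0 : ∃ u ∈ Sf, u.val = 0
    · obtain ⟨u, huS, hu0⟩ := h0
      have hA1 : 1 ≤ A.card := by
        apply Finset.card_pos.mpr
        exact ⟨u, by simp only [hA, Finset.mem_filter]; exact ⟨huS, hu0⟩⟩
      have hsub : O0 ⊆ O := by
        intro x hx
        simp only [hO0, hO, Finset.mem_filter] at hx ⊢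
        exact ⟨hx.1, hx.2.1⟩
      calc O0.card ≤ O.card := Finset.card_le_card hsub
        _ ≤ A.card * O.card := Nat.le_mul_of_pos_left _ hA1
    · have : O0 = ∅ := by
        rw [Finset.eq_empty_iff_forall_notMem]
        intro x hx
        simp only [hO0, Finset.mem_filter] at hx
        exact h0 hx.2.2
      simp [this]
  have hecb : Ev2.card ≤ C.card * Ev.card := by
    by_cases h0 : ∃ u ∈ Sf, u.val = 2
    · obtain ⟨u, huS, hu0⟩ := h0
      have hC1 : 1 ≤ C.card := by
        apply Finset.card_pos.mpr
        exact ⟨u, by simp only [hC, Finset.mem_filter]; exact ⟨huS, hu0⟩⟩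
      have hsub : Ev2 ⊆ Ev := by
        intro x hx
        simp only [hEv2, hEv, Finset.mem_filter] at hx ⊢
        exact ⟨hx.1, hx.2.1⟩
      calc Ev2.card ≤ Ev.card := Finset.card_le_card hsub
        _ ≤ C.card * Ev.card := Nat.le_mul_of_pos_left _ hC1
    · have : Ev2 = ∅ := by
        rw [Finset.eq_empty_iff_forall_notMem]
        intro x hx
        simp only [hEv2, Finset.mem_filter] at hx
        exact h0 hx.2.2
      simp [this]
  -- edge bound
  have hE : Ff.card ≤ O0.card + M.card + Ev2.card := by
    have hinj : Set.InjOn (psi p) ↑Ff := by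
      intro e1 h1 e2 h2 heq
      rw [Finset.mem_coe, hefin.mem_toFinset] at h1 h2
      obtain ⟨u1, v1, rfl, hu1, hv1, hr1⟩ := edge_cases H e1 h1
      obtain ⟨u2, v2, rfl, hu2, hv2, hr2⟩ := edge_cases H e2 h2
      rw [psi_mk, psi_mk] at heq
      rcases keyfun_spec u1 v1 hr1 with ⟨hz1, hp1, hk1⟩ | ⟨hz1, hp1, hk1⟩ | ⟨hz1, hp1, hp1', hk1⟩ <;>
        rcases keyfun_spec u2 v2 hr2 with ⟨hz2, hp2, hk2⟩ | ⟨hz2, hp2, hk2⟩ | ⟨hz2, hp2, hp2', hk2⟩ <;>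
        rw [hk1, hk2] at heq <;>
        simp only [Prod.mk.injEq] at heq <;>
        first
          | omega
          | (obtain ⟨heq1, -⟩ := heq
             have hu : u1 = u2 := by
               apply Fin.ext
               first | omega | (have := congrArg Fin.val heq1; omega)
             have hv : v1 = v2 := by
               apply Fin.ext
               first | omega | (have := congrArg Fin.val heq1; omega)
             rw [hu, hv])
    have himg : Ff.image (psi p) ⊆
        (O0.image (fun v => (v, 0))) ∪ (M.image (fun v => (v, 1))) ∪ (Ev2.image (fun v => (v, 2))) := by
      intro q hq
      rw [Finset.mem_image] at hq
      obtain ⟨ed, hed, rfl⟩ := hq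
      rw [hefin.mem_toFinset] at hed
      obtain ⟨u, v, rfl, hu, hv, hr⟩ := edge_cases H ed hed
      rw [psi_mk]
      rcases keyfun_spec u v hr with ⟨hz, hpr, hk⟩ | ⟨hz, hpr, hk⟩ | ⟨hz, hpr, hpr', hk⟩
      · rw [hk]
        apply Finset.mem_union_left; apply Finset.mem_union_left
        rw [Finset.mem_image]
        refine ⟨v, ?_, rfl⟩
        simp only [hO0, Finset.mem_filter]
        exact ⟨(hmemS v).mpr hv, hpr, u, (hmemS u).mpr hu, hz⟩
      · rw [hk]
        apply Finset.mem_union_left; apply Finset.mem_union_right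
        rw [Finset.mem_image]
        refine ⟨u, ?_, rfl⟩
        simp only [hM, Finset.mem_filter]
        exact ⟨(hmemS u).mpr hu, hz, v, (hmemS v).mpr hv, hpr⟩
      · rw [hk]
        apply Finset.mem_union_right
        rw [Finset.mem_image]
        refine ⟨v, ?_, rfl⟩
        simp only [hEv2, Finset.mem_filter]
        exact ⟨(hmemS v).mpr hv, ⟨hpr, hpr'⟩, u, (hmemS u).mpr hu, hz⟩
    calc Ff.card = (Ff.image (psi p)).card := (Finset.card_image_of_injOn hinj).symm
      _ ≤ _ := Finset.card_le_card himg
      _ ≤ _ := by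
          refine le_trans (Finset.card_union_le _ _) ?_
          have := Finset.card_union_le (O0.image (fun v => (v, 0))) (M.image (fun v => (v, 1)))
          have i1 := Finset.card_image_le (s := O0) (f := fun v => (v, 0))
          have i2 := Finset.card_image_le (s := M) (f := fun v => (v, 1))
          have i3 := Finset.card_image_le (s := Ev2) (f := fun v => (v, 2))
          omega
  -- conclude
  have hEn : H.edgeSet.ncard = Ff.card := Set.ncard_eq_toFinset_card _ hefin
  have hVn : H.verts.ncard = Sf.card := Set.ncard_eq_toFinset_card _ hvfin
  rw [hEn, hVn]
  exact arith p O.card Ev.card M.card O0.card Ev2.card A.card C.card Ff.card Sf.card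
    hp ho he hmo hmec hoa hecb ha hc hE hV


def colv (p : ℕ) (a : ℕ) : ℕ :=
  if a < 3 then p - 1 + a
  else if a % 2 = 1 then (a - 3) / 2
  else ((a - 2) / 2) % (p - 1)

lemma colv_lt (p a : ℕ) (hp : 3 ≤ p) (ha : a < 2*p+1) : colv p a < p + 2 := by
  unfold colv
  split_ifs with h1 h2
  · omega
  · omega
  · have : ((a-2)/2) % (p-1) < p - 1 := Nat.mod_lt _ (by omega)
    omega

lemma colv_eq_cases (p : ℕ) (hp : 3 ≤ p) (a b : ℕ) (ha : a < 2*p+1) (hb : b < 2*p+1)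
    (hne : a ≠ b) (h : colv p a = colv p b) :
    (a % 2 = 1 ∧ 3 ≤ a ∧ b % 2 = 0 ∧ 4 ≤ b ∧ b ≠ a + 1) ∨
    (b % 2 = 1 ∧ 3 ≤ b ∧ a % 2 = 0 ∧ 4 ≤ a ∧ a ≠ b + 1) := by
  have hmod : ∀ x : ℕ, x ≤ p - 1 → (x < p-1 ∧ x % (p-1) = x) ∨ (x = p-1 ∧ x % (p-1) = 0) := by
    intro x hx
    rcases Nat.lt_or_ge x (p-1) with h'|h'
    · exact Or.inl ⟨h', Nat.mod_eq_of_lt h'⟩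
    · right
      have : x = p-1 := le_antisymm hx h'
      subst this
      exact ⟨rfl, Nat.mod_self _⟩
  have m1 := hmod ((a-2)/2) (by omega)
  have m2 := hmod ((b-2)/2) (by omega)
  rcases m1 with ⟨hm1l, hm1⟩ | ⟨hm1e, hm1⟩ <;> rcases m2 with ⟨hm2l, hm2⟩ | ⟨hm2e, hm2⟩ <;>
    unfold colv at h <;> split_ifs at h <;>
    (try simp only [hm1, hm2] at h) <;> omega

lemma not_sq_adj {p : ℕ} (u v : Fin (2*p+1))
    (h : u.val % 2 = 1 ∧ 3 ≤ u.val ∧ v.val % 2 = 0 ∧ 4 ≤ v.val ∧ v.val ≠ u.val + 1) :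
    ¬ (graph p).square.Adj u v := by
  rintro ⟨hne, hadj | ⟨w, h1, h2⟩⟩
  · rw [adj_iff] at hadj; unfold rel at hadj; omega
  · rw [adj_odd u w h.1] at h1
    rw [show (graph p).Adj w v ↔ (graph p).Adj v w from ⟨fun h => h.symm, fun h => h.symm⟩,
        adj_even v w h.2.2.1 h.2.2.2.1] at h2
    omega

def theColoring (p : ℕ) (hp : 3 ≤ p) : ((graph p).square).Coloring (Fin (p+2)) :=
  SimpleGraph.Coloring.mk (fun v => ⟨colv p v.val, colv_lt p v.val hp v.isLt⟩) (by
    intro u v hadj heq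
    simp only [Fin.mk.injEq] at heq
    have hne : u.val ≠ v.val := fun hv => hadj.1 (Fin.ext hv)
    rcases colv_eq_cases p hp u.val v.val u.isLt v.isLt hne heq with hcase | hcase
    · exact not_sq_adj u v hcase hadj
    · exact not_sq_adj v u hcase hadj.symm)

def clq (p : ℕ) : Finset (Fin (2*p+1)) :=
  univ.filter (fun v => v.val = 0 ∨ v.val = 2 ∨ v.val % 2 = 1)

lemma clq_card (p : ℕ) (hp : 3 ≤ p) : (clq p).card = p + 2 := by
  unfold clq
  rw [Finset.filter_congr (fun (v : Fin (2*p+1)) (_ : v ∈ univ) => (by tauto :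
        (v.val = 0 ∨ v.val = 2 ∨ v.val % 2 = 1) ↔ ((v.val = 0 ∨ v.val = 2) ∨ v.val % 2 = 1))),
      Finset.filter_or, Finset.card_union_of_disjoint]
  · rw [card_val_two _ 0 2 (by omega) (by omega) (by omega), card_odd_fin p]
    omega
  · rw [Finset.disjoint_left]
    intro x hx hx'
    simp only [Finset.mem_filter] at hx hx'
    omega

lemma clq_isClique (p : ℕ) (hp : 3 ≤ p) : ((graph p).square).IsClique (clq p) := by
  intro u hu v hv hne
  simp only [clq, Finset.coe_filter, Set.mem_setOf_eq, Finset.mem_univ, true_and] at hu hv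
  have hvalne : u.val ≠ v.val := fun h => hne (Fin.ext h)
  refine ⟨hne, ?_⟩
  -- helper adjacency facts
  rcases hu with h0 | h2 | hodd
  · -- u = 0
    rcases hv with k0 | k2 | kodd
    · omega
    · -- 0 and 2 : common neighbor 1
      refine Or.inr ⟨⟨1, by omega⟩, ?_, ?_⟩
      · rw [adj_zero u _ h0]; rfl
      · rw [adj_odd (⟨1, by omega⟩ : Fin (2*p+1)) v rfl]
        simp only [Fin.val_mk]
        omega
    · exact Or.inl ((adj_zero u v h0).mpr kodd)
  · -- u = 2
    rcases hv with k0 | k2 | kodd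
    · -- 2 and 0 : common neighbor 1
      refine Or.inr ⟨⟨1, by omega⟩, ?_, ?_⟩
      · rw [adj_two u _ h2]; left; rfl
      · rw [adj_odd (⟨1, by omega⟩ : Fin (2*p+1)) v rfl]
        simp only [Fin.val_mk]
        omega
    · omega
    · -- 2 and odd
      by_cases hb1 : v.val = 1
      · refine Or.inl ?_
        rw [adj_iff]
        right
        unfold rel
        omega
      · have hlt : v.val + 1 < 2*p+1 := by have := v.isLt; omega
        refine Or.inr ⟨⟨v.val + 1, hlt⟩, ?_, ?_⟩
        · rw [adj_two u _ h2]
          right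
          constructor <;> simp <;> omega
        · rw [show (graph p).Adj (⟨v.val+1, hlt⟩ : Fin (2*p+1)) v ↔
              (graph p).Adj v (⟨v.val+1, hlt⟩ : Fin (2*p+1)) from
              ⟨fun h => h.symm, fun h => h.symm⟩, adj_odd v _ kodd]
          right; rfl
  · -- u odd
    rcases hv with k0 | k2 | kodd
    · exact Or.inl ((adj_zero v u k0).mpr hodd).symm
    · -- odd and 2
      by_cases hb1 : u.val = 1
      · refine Or.inl ?_
        rw [adj_iff]
        left
        unfold rel
        omega
      · have hlt : u.val + 1 < 2*p+1 := by have := u.isLt; omega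
        refine Or.inr ⟨⟨u.val + 1, hlt⟩, ?_, ?_⟩
        · rw [adj_odd u _ hodd]
          right; rfl
        · rw [show (graph p).Adj (⟨u.val+1, hlt⟩ : Fin (2*p+1)) v ↔
              (graph p).Adj v (⟨u.val+1, hlt⟩ : Fin (2*p+1)) from
              ⟨fun h => h.symm, fun h => h.symm⟩, adj_two v _ k2]
          right
          constructor <;> simp <;> omega
    · -- odd odd : common neighbor 0
      refine Or.inr ⟨⟨0, by omega⟩, ?_, ?_⟩
      · exact ((adj_zero (⟨0, by omega⟩ : Fin (2*p+1)) u rfl).mpr hodd).symm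
      · rw [adj_zero (⟨0, by omega⟩ : Fin (2*p+1)) v rfl]
        exact kodd

lemma chrom_eq (p : ℕ) (hp : 3 ≤ p) :
    ((graph p).square).chromaticNumber = ((p + 2 : ℕ) : ℕ∞) := by
  apply le_antisymm
  · have hcol : ((graph p).square).Colorable (p+2) := by
      have := (theColoring p hp).colorable
      simpa using this
    exact hcol.chromaticNumber_le
  · have h := (clq_isClique p hp).card_le_chromaticNumber
    rw [clq_card p hp] at h
    exact_mod_cast h


end S13

theorem statement13 (p : ℕ) (hp : 3 ≤ p) :
    ∃ G : SimpleGraph (Fin (2 * p + 1)),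
      maxDeg G = p ∧
      (∀ H : G.Subgraph, H.verts.Nonempty →
        2 * (H.edgeSet.ncard : ℝ) ≤ (3 - 5 / ((2 * p + 1 : ℕ) : ℝ)) * (H.verts.ncard : ℝ)) ∧
      (∃ H : G.Subgraph, H.verts.Nonempty ∧
        2 * (H.edgeSet.ncard : ℝ) = (3 - 5 / ((2 * p + 1 : ℕ) : ℝ)) * (H.verts.ncard : ℝ)) ∧
      (G.square).chromaticNumber = ((p + 2 : ℕ) : ℕ∞) := by
  classical
  refine ⟨S13.graph p, S13.maxDeg_eq p hp, ?_, ?_, S13.chrom_eq p hp⟩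
  · intro H _
    have hn := S13.sub_bound hp H
    have hcast : ((2*p+1 : ℕ) : ℝ) = 2*(p:ℝ)+1 := by push_cast; ring
    have hpos : (0:ℝ) < ((2*p+1:ℕ):ℝ) := by rw [hcast]; positivity
    have h62 : ((6*p-2:ℕ):ℝ) = 6*(p:ℝ) - 2 := by
      rw [Nat.cast_sub (by omega : (2:ℕ) ≤ 6*p)]
      push_cast; ring
    have hkey : ((3:ℝ) - 5 / ((2*p+1:ℕ):ℝ)) = ((6*p-2 : ℕ):ℝ) / ((2*p+1:ℕ):ℝ) := by
      rw [h62, hcast]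
      have hne : (2*(p:ℝ)+1) ≠ 0 := by positivity
      field_simp
      ring
    rw [hkey, div_mul_eq_mul_div, le_div_iff₀ hpos]
    have hrw : (2 : ℝ) * (H.edgeSet.ncard : ℝ) * ((2*p+1:ℕ):ℝ)
        = (((4*p+2) * H.edgeSet.ncard : ℕ) : ℝ) := by push_cast; ring
    rw [hrw]
    have : (((6*p-2) * H.verts.ncard : ℕ) : ℝ) = ((6*p-2:ℕ):ℝ) * (H.verts.ncard : ℝ) := by
      push_cast; ring
    rw [← this]
    exact_mod_cast hn
  · refine ⟨⊤, ⟨⟨0, by omega⟩, trivial⟩, ?_⟩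
    have hE : (⊤ : (S13.graph p).Subgraph).edgeSet.ncard = 3*p - 1 := by
      have h1 : (⊤ : (S13.graph p).Subgraph).edgeSet = (S13.graph p).edgeSet := rfl
      rw [h1, Set.ncard_eq_toFinset_card']
      have h2 : (S13.graph p).edgeSet.toFinset = (S13.graph p).edgeFinset := by
        ext e; simp [SimpleGraph.mem_edgeFinset]
      rw [h2]
      exact S13.card_edgeFinset p hp
    have hV : (⊤ : (S13.graph p).Subgraph).verts.ncard = 2*p+1 := by
      have h1 : (⊤ : (S13.graph p).Subgraph).verts = Set.univ := rfl
      rw [h1, Set.ncard_univ, Nat.card_eq_fintype_card, Fintype.card_fin]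
    rw [hE, hV]
    have h31 : ((3*p-1:ℕ):ℝ) = 3*(p:ℝ) - 1 := by
      rw [Nat.cast_sub (by omega : (1:ℕ) ≤ 3*p)]
      push_cast; ring
    have hcast : ((2*p+1 : ℕ) : ℝ) = 2*(p:ℝ)+1 := by push_cast; ring
    rw [h31, hcast]
    have hne : (2*(p:ℝ)+1) ≠ 0 := by positivity
    field_simp
    ring
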